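/- Let M = p₁^{n₁} ⋯ p_K^{n_K} with distinct primes p_ν and n_ν ≥ 1. For each ν = 1,…,K let x_ν, x'_ν ∈ ℤ/Mℤ satisfy gcd(x_ν, M) = gcd(x'_ν, M) = M / p_ν^{α_ν} with α_ν ≥ 1. Then there exists a unit r of ℤ/Mℤ such that r·x_ν = x'_ν for all ν simultaneously. -/

import Mathlib

/-- Pure number theory: compute `gcd A (p^nn)` from `gcd A M`. -/
lemma gcd_pow_aux {A M p nn a : ℕ} (hp : p.Prime) (R : ℕ) (hMR : M = p ^ nn * R)
    (hpR : ¬ p ∣ R) (ha : 1 ≤ a) (han : a ≤ nn)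
    (hgcd : Nat.gcd A M = M / p ^ a) :
    Nat.gcd A (p ^ nn) = p ^ (nn - a) := by
  have hdivM : M / p ^ a = p ^ (nn - a) * R := by
    rw [hMR, ← Nat.pow_sub_mul_pow p han, mul_assoc,
      Nat.mul_div_assoc _ (dvd_mul_right _ R), Nat.mul_div_cancel_left _ (pow_pos hp.pos a)]
  have hgA : p ^ (nn - a) ∣ Nat.gcd A M := by
    rw [hgcd, hdivM]; exact dvd_mul_right _ R
  have h1 : p ^ (nn - a) ∣ Nat.gcd A (p ^ nn) :=
    Nat.dvd_gcd (dvd_trans hgA (Nat.gcd_dvd_left A M)) (pow_dvd_pow p (Nat.sub_le nn a))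
  obtain ⟨k, hk, hkeq⟩ := (Nat.dvd_prime_pow hp).mp (Nat.gcd_dvd_right A (p ^ nn))
  rw [hkeq] at h1 ⊢
  have hk1 : nn - a ≤ k := (Nat.pow_dvd_pow_iff_le_right hp.one_lt).mp h1
  have hk2 : k ≤ nn - a := by
    by_contra h
    push_neg at h
    have hdvdA : p ^ (nn - a + 1) ∣ A :=
      dvd_trans (pow_dvd_pow p h) (hkeq ▸ Nat.gcd_dvd_left A (p ^ nn))
    have hdvdM : p ^ (nn - a + 1) ∣ M := by
      rw [hMR]; exact dvd_mul_of_dvd_left (pow_dvd_pow p (by omega)) R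
    have : p ^ (nn - a + 1) ∣ p ^ (nn - a) * R := by
      rw [← hdivM, ← hgcd]; exact Nat.dvd_gcd hdvdA hdvdM
    rw [pow_succ] at this
    exact hpR ((Nat.mul_dvd_mul_iff_left (pow_pos hp.pos (nn - a))).mp this)
  rw [Nat.le_antisymm hk2 hk1]

/-- Decomposition: an element of `ZMod (p^nn)` whose gcd with `p^nn` is `p^(nn-a)`
is `p^(nn-a)` times a unit. -/
lemma zmod_decomp {p nn a : ℕ} (hp : p.Prime) (ha : 1 ≤ a) (han : a ≤ nn)
    (Y : ZMod (p ^ nn)) (hY : Nat.gcd Y.val (p ^ nn) = p ^ (nn - a)) :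
    ∃ u : (ZMod (p ^ nn))ˣ, Y = (p : ZMod (p ^ nn)) ^ (nn - a) * u := by
  haveI : NeZero (p ^ nn) := ⟨(pow_pos hp.pos nn).ne'⟩
  have hdvd : p ^ (nn - a) ∣ Y.val := hY ▸ Nat.gcd_dvd_left _ _
  obtain ⟨b, hb⟩ := hdvd
  have hpb : ¬ p ∣ b := by
    intro hpbdvd
    have h1 : p ^ (nn - a + 1) ∣ Y.val := by
      rw [hb, pow_succ]; exact mul_dvd_mul_left _ hpbdvd
    have h2 : p ^ (nn - a + 1) ∣ p ^ nn := pow_dvd_pow p (by omega)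
    have h3 : p ^ (nn - a + 1) ∣ p ^ (nn - a) := hY ▸ Nat.dvd_gcd h1 h2
    exact absurd ((Nat.pow_dvd_pow_iff_le_right hp.one_lt).mp h3) (by omega)
  have hcop : Nat.Coprime b (p ^ nn) :=
    Nat.Coprime.pow_right nn ((Nat.Prime.coprime_iff_not_dvd hp).mpr hpb).symm
  refine ⟨ZMod.unitOfCoprime b hcop, ?_⟩
  rw [ZMod.coe_unitOfCoprime]
  have hYY : Y = ((Y.val : ℕ) : ZMod (p ^ nn)) := (ZMod.natCast_rightInverse Y).symm
  rw [hYY, hb]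
  push_cast
  ring

theorem multitransitivity_of_dilations (M K : ℕ)
    (p : Fin K → ℕ) (hp : ∀ ν, (p ν).Prime)
    (hdist : Function.Injective p)
    (n : Fin K → ℕ) (hn : ∀ ν, 1 ≤ n ν)
    (hM : M = ∏ ν, p ν ^ n ν)
    (α : Fin K → ℕ) (hα : ∀ ν, 1 ≤ α ν) (hαn : ∀ ν, α ν ≤ n ν)
    (x x' : Fin K → ZMod M)
    (hx : ∀ ν, Nat.gcd (x ν).val M = M / p ν ^ α ν)
    (hx' : ∀ ν, Nat.gcd (x' ν).val M = M / p ν ^ α ν) :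
    ∃ r : ZMod M, Nat.gcd r.val M = 1 ∧ ∀ ν, r * x ν = x' ν := by
  subst hM
  haveI : NeZero (∏ ν, p ν ^ n ν) :=
    ⟨(Finset.prod_pos fun ν _ => pow_pos (hp ν).pos _).ne'⟩
  have cop : Pairwise (Function.onFun Nat.Coprime fun ν => p ν ^ n ν) := fun i j hij =>
    Nat.Coprime.pow _ _ ((Nat.coprime_primes (hp i) (hp j)).mpr fun h => hij (hdist h))
  let φ := ZMod.prodEquivPi (fun ν => p ν ^ n ν) cop
  have hdvd : ∀ μ, p μ ^ n μ ∣ ∏ ν, p ν ^ n ν := fun μ =>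
    Finset.dvd_prod_of_mem _ (Finset.mem_univ μ)
  let ψ : ∀ μ, ZMod (∏ ν, p ν ^ n ν) →+* ZMod (p μ ^ n μ) := fun μ => ZMod.castHom (hdvd μ) _
  have hcomp : ∀ μ (y : ZMod (∏ ν, p ν ^ n ν)), φ y μ = ψ μ y := by
    intro μ y
    have := RingHom.ext_zmod ((Pi.evalRingHom _ μ).comp
      (φ : ZMod (∏ ν, p ν ^ n ν) →+* ∀ ν, ZMod (p ν ^ n ν))) (ψ μ)
    exact RingHom.congr_fun this y
  have hsplit : ∀ ν, ∃ R : ℕ, (∏ μ, p μ ^ n μ) = p ν ^ n ν * R ∧ ¬ p ν ∣ R ∧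
      ∀ μ, μ ≠ ν → p μ ^ n μ ∣ R := by
    intro ν
    refine ⟨∏ μ ∈ Finset.univ.erase ν, p μ ^ n μ,
      (Finset.mul_prod_erase _ _ (Finset.mem_univ ν)).symm,
      ?_, fun μ hμ => Finset.dvd_prod_of_mem _ (Finset.mem_erase.mpr ⟨hμ, Finset.mem_univ μ⟩)⟩
    have hcopR : Nat.Coprime (p ν) (∏ μ ∈ Finset.univ.erase ν, p μ ^ n μ) :=
      Nat.Coprime.prod_right fun μ hμ =>
        Nat.Coprime.pow_right _ ((Nat.coprime_primes (hp ν) (hp μ)).mpr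
          fun h => (Finset.mem_erase.mp hμ).1 (hdist h.symm))
    exact (Nat.Prime.coprime_iff_not_dvd (hp ν)).mp hcopR
  have hdiv : ∀ ν (R : ℕ), (∏ μ, p μ ^ n μ) = p ν ^ n ν * R →
      (∏ μ, p μ ^ n μ) / p ν ^ α ν = p ν ^ (n ν - α ν) * R := by
    intro ν R hR
    rw [hR, ← Nat.pow_sub_mul_pow (p ν) (hαn ν), mul_comm (p ν ^ (n ν - α ν)) _, mul_assoc,
      Nat.mul_div_cancel_left _ (pow_pos (hp ν).pos _), mul_comm]
  have hzero : ∀ (y : ZMod (∏ ν, p ν ^ n ν)) ν,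
      Nat.gcd y.val (∏ μ, p μ ^ n μ) = (∏ μ, p μ ^ n μ) / p ν ^ α ν →
      ∀ μ, μ ≠ ν → ψ μ y = 0 := by
    intro y ν hy μ hμ
    obtain ⟨R, hR, -, hdvdR⟩ := hsplit ν
    have h1 : p μ ^ n μ ∣ y.val := by
      refine dvd_trans ?_ (hy ▸ Nat.gcd_dvd_left _ _)
      rw [hdiv ν R hR]
      exact Dvd.dvd.mul_left (hdvdR μ hμ) _
    have h2 : ψ μ y = ((y.val : ℕ) : ZMod (p μ ^ n μ)) := by
      rw [ZMod.castHom_apply, ← ZMod.natCast_val]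
    rw [h2]
    exact (ZMod.natCast_eq_zero_iff _ _).mpr h1
  have hdiag : ∀ (y : ZMod (∏ ν, p ν ^ n ν)) ν,
      Nat.gcd y.val (∏ μ, p μ ^ n μ) = (∏ μ, p μ ^ n μ) / p ν ^ α ν →
      Nat.gcd (ψ ν y).val (p ν ^ n ν) = p ν ^ (n ν - α ν) := by
    intro y ν hy
    obtain ⟨R, hR, hpR, -⟩ := hsplit ν
    have hval : (ψ ν y).val = y.val % p ν ^ n ν := by
      rw [ZMod.castHom_apply, ← ZMod.natCast_val, ZMod.val_natCast]
    rw [hval]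
    have hmod : Nat.gcd (y.val % p ν ^ n ν) (p ν ^ n ν) = Nat.gcd y.val (p ν ^ n ν) := by
      rw [← Nat.gcd_rec, Nat.gcd_comm]
    rw [hmod]
    exact gcd_pow_aux (hp ν) R hR hpR (hα ν) (hαn ν) hy
  have hux : ∀ ν, ∃ u : (ZMod (p ν ^ n ν))ˣ,
      ψ ν (x ν) = (p ν : ZMod (p ν ^ n ν)) ^ (n ν - α ν) * u :=
    fun ν => zmod_decomp (hp ν) (hα ν) (hαn ν) _ (hdiag (x ν) ν (hx ν))
  have hux' : ∀ ν, ∃ u : (ZMod (p ν ^ n ν))ˣ,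
      ψ ν (x' ν) = (p ν : ZMod (p ν ^ n ν)) ^ (n ν - α ν) * u :=
    fun ν => zmod_decomp (hp ν) (hα ν) (hαn ν) _ (hdiag (x' ν) ν (hx' ν))
  choose u hu using hux
  choose u' hu' using hux'
  let v : ∀ μ, ZMod (p μ ^ n μ) := fun μ => (u' μ * (u μ)⁻¹ : (ZMod (p μ ^ n μ))ˣ)
  have hvunit : IsUnit v :=
    ⟨⟨v, fun μ => ((u' μ * (u μ)⁻¹)⁻¹ : (ZMod (p μ ^ n μ))ˣ),
      funext fun μ => Units.mul_inv _, funext fun μ => Units.inv_mul _⟩, rfl⟩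
  refine ⟨φ.symm v, ?_, ?_⟩
  · obtain ⟨w, hw⟩ := hvunit.map φ.symm
    rw [← hw]
    exact ZMod.val_coe_unit_coprime w
  · intro ν
    apply φ.injective
    rw [map_mul]
    funext μ
    simp only [Pi.mul_apply]
    rw [RingEquiv.apply_symm_apply, hcomp μ (x ν), hcomp μ (x' ν)]
    by_cases hμν : μ = ν
    · subst hμν
      rw [hu μ, hu' μ]
      have h1 : ((u μ)⁻¹ : (ZMod (p μ ^ n μ))ˣ) * (u μ) = 1 := inv_mul_cancel _
      have h2 : (((u μ)⁻¹ : (ZMod (p μ ^ n μ))ˣ) : ZMod (p μ ^ n μ)) * (u μ : ZMod (p μ ^ n μ)) = 1 := by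
        have := congrArg (Units.val) h1
        rwa [Units.val_mul, Units.val_one] at this
      show ((u' μ * (u μ)⁻¹ : (ZMod (p μ ^ n μ))ˣ) : ZMod (p μ ^ n μ)) * _ = _
      push_cast
      linear_combination ((p μ : ZMod (p μ ^ n μ)) ^ (n μ - α μ) * (u' μ : ZMod (p μ ^ n μ))) * h2
    · rw [hzero (x ν) ν (hx ν) μ hμν, hzero (x' ν) ν (hx' ν) μ hμν, mul_zero]
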